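/- arXiv:2412.20159 — 8 statements merged into one kernel-verified Lean document; each statement's English description precedes it below -/
import Mathlib

section
/- Every nonempty family F of partial isometries on a complex Hilbert space H has an infimum in the Halmos–McLaughlin order: namely, the operator that agrees with the elements of F on the largest closed subspace of ⋂_{E∈F} (ker E)ᗮ on which all elements of F coincide, and vanishes on its orthogonal complement, is a partial isometry and is the greatest lower bound of F. -/
open ContinuousLinearMap

variable {H : Type*} [NormedAddCommGroup H] [InnerProductSpace ℂ H] [CompleteSpace H]

/-- A bounded operator is a partial isometry if it is isometric on `(ker V)ᗮ`. -/
def IsPartialIsometry (V : H →L[ℂ] H) : Prop :=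
  ∀ x ∈ (LinearMap.ker (V : H →ₗ[ℂ] H))ᗮ, ‖V x‖ = ‖x‖

/-- The Halmos–McLaughlin order: `E ≤ F` iff `F` agrees with `E` on the initial
space `(ker E)ᗮ` of `E`. -/
def HMle (E F : H →L[ℂ] H) : Prop :=
  ∀ x ∈ (LinearMap.ker (E : H →ₗ[ℂ] H))ᗮ, F x = E x

theorem exists_infimum_of_partialIsometries (𝓕 : Set (H →L[ℂ] H))
    (h𝓕 : ∀ V ∈ 𝓕, IsPartialIsometry V) (hne : 𝓕.Nonempty) :
    ∃ G : H →L[ℂ] H, IsPartialIsometry G ∧ (∀ E ∈ 𝓕, HMle G E) ∧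
      ∀ W : H →L[ℂ] H, IsPartialIsometry W → (∀ E ∈ 𝓕, HMle W E) → HMle W G := by
  obtain ⟨E₀, hE₀⟩ := hne
  set K : Submodule ℂ H :=
    (⨅ E ∈ 𝓕, (LinearMap.ker (E : H →ₗ[ℂ] H))ᗮ) ⊓ ⨅ E ∈ 𝓕, ⨅ F ∈ 𝓕, LinearMap.ker ((E - F : H →L[ℂ] H) : H →ₗ[ℂ] H) with hKdef
  have hmemK : ∀ x : H, x ∈ K ↔
      (∀ E ∈ 𝓕, x ∈ (LinearMap.ker (E : H →ₗ[ℂ] H))ᗮ) ∧ ∀ E ∈ 𝓕, ∀ F ∈ 𝓕, E x = F x := by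
    intro x
    simp [hKdef, Submodule.mem_inf, Submodule.mem_iInf, LinearMap.mem_ker, sub_eq_zero]
  have hKclosed : IsClosed (K : Set H) := by
    have : (K : Set H) = (⋂ E ∈ 𝓕, ((LinearMap.ker (E : H →ₗ[ℂ] H))ᗮ : Set H)) ∩
        ⋂ E ∈ 𝓕, ⋂ F ∈ 𝓕, ((LinearMap.ker ((E - F : H →L[ℂ] H) : H →ₗ[ℂ] H) : Submodule ℂ H) : Set H) := by
      ext x
      simp [hmemK x, Set.mem_iInter, LinearMap.mem_ker, sub_eq_zero]
    rw [this]
    refine IsClosed.inter ?_ ?_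
    · exact isClosed_iInter fun E => isClosed_iInter fun _ =>
        Submodule.isClosed_orthogonal _
    · exact isClosed_iInter fun E => isClosed_iInter fun _ =>
        isClosed_iInter fun F => isClosed_iInter fun _ => ContinuousLinearMap.isClosed_ker (E - F)
  haveI : CompleteSpace K := hKclosed.completeSpace_coe
  set P : H →L[ℂ] H := K.subtypeL ∘L K.orthogonalProjectionOnto with hPdef
  have hPmem : ∀ x, P x ∈ K := fun x => (K.orthogonalProjectionOnto x).2
  have hPid : ∀ x ∈ K, P x = x := fun x hx => by
    simpa [hPdef] using Submodule.starProjection_eq_self_iff.2 hx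
  have hPzero : ∀ x ∈ Kᗮ, P x = 0 := fun x hx => by
    simp [hPdef, Submodule.orthogonalProjectionOnto_apply_of_mem_orthogonal hx]
  set G : H →L[ℂ] H := E₀ ∘L P with hGdef
  -- on K, G agrees with E₀
  have hGK : ∀ x ∈ K, G x = E₀ x := fun x hx => by
    simp [hGdef, hPid x hx]
  -- kernel of G is Kᗮ
  have hker : LinearMap.ker (G : H →ₗ[ℂ] H) = Kᗮ := by
    ext x
    constructor
    · intro hx
      have h0 : E₀ (P x) = 0 := hx
      have hPK := hPmem x
      have hinit : P x ∈ (LinearMap.ker (E₀ : H →ₗ[ℂ] H))ᗮ := ((hmemK _).1 hPK).1 E₀ hE₀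
      have := h𝓕 E₀ hE₀ (P x) hinit
      rw [h0, norm_zero] at this
      have hP0 : P x = 0 := by
        simpa using (norm_eq_zero.1 this.symm)
      have : K.orthogonalProjectionOnto x = 0 := by
        have := congrArg (fun y => y) hP0
        exact Subtype.coe_injective (by simpa [hPdef] using hP0)
      exact (Submodule.orthogonalProjectionOnto_eq_zero_iff.1 this)
    · intro hx
      have : P x = 0 := hPzero x hx
      show E₀ (P x) = 0
      rw [this, map_zero]
  have hkerOrth : (LinearMap.ker (G : H →ₗ[ℂ] H))ᗮ = K := by
    rw [hker, Submodule.orthogonal_orthogonal]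
  refine ⟨G, ?_, ?_, ?_⟩
  · -- partial isometry
    intro x hx
    rw [hkerOrth] at hx
    rw [hGK x hx]
    exact h𝓕 E₀ hE₀ x (((hmemK x).1 hx).1 E₀ hE₀)
  · -- G ≤ E for all E ∈ 𝓕
    intro E hE x hx
    rw [hkerOrth] at hx
    rw [hGK x hx]
    exact ((hmemK x).1 hx).2 E hE E₀ hE₀
  · -- greatest lower bound
    intro W hW hWle x hx
    have hxK : x ∈ K := by
      rw [hmemK]
      constructor
      · intro E hE
        -- x ∈ (ker E)ᗮ
        obtain ⟨x₁, hx₁, x₂, hx₂, rfl⟩ :=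
          Submodule.exists_add_mem_mem_orthogonal (K := LinearMap.ker (E : H →ₗ[ℂ] H)) x
        have hEx : E (x₁ + x₂) = W (x₁ + x₂) := hWle E hE (x₁ + x₂) hx
        have hnormW : ‖W (x₁ + x₂)‖ = ‖x₁ + x₂‖ := hW _ hx
        have hEx₂ : E (x₁ + x₂) = E x₂ := by
          have : E x₁ = 0 := hx₁
          rw [map_add, this, zero_add]
        have hnormE : ‖E x₂‖ = ‖x₂‖ := h𝓕 E hE x₂ hx₂
        have hn : ‖x₁ + x₂‖ = ‖x₂‖ := by
          rw [← hnormW, ← hEx, hEx₂, hnormE]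
        have hpyth : ‖x₁ + x₂‖ ^ 2 = ‖x₁‖ ^ 2 + ‖x₂‖ ^ 2 := by
          have hinner : (inner ℂ x₁ x₂ : ℂ) = 0 :=
            (Submodule.mem_orthogonal (LinearMap.ker (E : H →ₗ[ℂ] H)) x₂).1 hx₂ x₁ hx₁
          rw [@norm_add_sq ℂ _ _ _ _ x₁ x₂, hinner]
          simp
        have hx₁0 : x₁ = 0 := by
          have : ‖x₁‖ ^ 2 = 0 := by
            have := hpyth
            rw [hn] at this
            linarith
          simpa using (pow_eq_zero_iff (n := 2) (by norm_num)).1 this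
        simpa [hx₁0] using hx₂
      · intro E hE F hF
        rw [hWle E hE x hx, hWle F hF x hx]
    rw [hGK x hxK, ← hWle E₀ hE₀ x hx]
end

section
/- Every nonempty family of partial isometries on a complex Hilbert space that is bounded above in the Halmos–McLaughlin order has a supremum in that order. -/
open ContinuousLinearMap

variable {H : Type*} [NormedAddCommGroup H] [InnerProductSpace ℂ H] [CompleteSpace H]

/-- If a partial isometry preserves the norm of `x`, then `x ⟂ ker U`. -/
lemma mem_orthogonal_ker_of_norm_eq (U : H →L[ℂ] H) (hU : IsPartialIsometry U)
    {x : H} (hx : ‖U x‖ = ‖x‖) : x ∈ (LinearMap.ker (U : H →ₗ[ℂ] H))ᗮ := by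
  set K : Submodule ℂ H := LinearMap.ker (U : H →ₗ[ℂ] H) with hK
  haveI : CompleteSpace K := (ContinuousLinearMap.isClosed_ker U).completeSpace_coe
  obtain ⟨y, hy, z, hz, hxyz⟩ := Submodule.exists_add_mem_mem_orthogonal (K := K) x
  have hUy : U y = 0 := hy
  have hUx : U x = U z := by rw [hxyz]; simp [hUy]
  have hinner : (inner ℂ y z : ℂ) = 0 := hz y hy
  have hnorm : ‖x‖ ^ 2 = ‖y‖ ^ 2 + ‖z‖ ^ 2 := by
    rw [hxyz, norm_add_sq (𝕜 := ℂ)]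
    simp [hinner]
  have hz' : ‖U z‖ = ‖z‖ := hU z hz
  have : ‖z‖ ^ 2 = ‖y‖ ^ 2 + ‖z‖ ^ 2 := by
    rw [← hnorm, ← hx, hUx, hz']
  have hy0 : y = 0 := by
    have : ‖y‖ ^ 2 = 0 := by linarith
    simpa using this
  rw [hxyz, hy0, zero_add]
  exact hz

theorem exists_supremum_of_bddAbove (𝓕 : Set (H →L[ℂ] H))
    (h𝓕 : ∀ V ∈ 𝓕, IsPartialIsometry V) (hne : 𝓕.Nonempty)
    (hbdd : ∃ U : H →L[ℂ] H, IsPartialIsometry U ∧ ∀ E ∈ 𝓕, HMle E U) :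
    ∃ S : H →L[ℂ] H, IsPartialIsometry S ∧ (∀ E ∈ 𝓕, HMle E S) ∧
      ∀ W : H →L[ℂ] H, IsPartialIsometry W → (∀ E ∈ 𝓕, HMle E W) → HMle S W := by
  obtain ⟨U, hU, hUub⟩ := hbdd
  -- the closed subspace generated by the initial spaces
  set M : Submodule ℂ H := (⨆ E ∈ 𝓕, (LinearMap.ker (E : H →ₗ[ℂ] H))ᗮ).topologicalClosure with hMdef
  have hMclosed : IsClosed (M : Set H) := Submodule.isClosed_topologicalClosure _
  haveI : CompleteSpace M := hMclosed.completeSpace_coe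
  -- each initial space sits inside `M`
  have hEle : ∀ E ∈ 𝓕, (LinearMap.ker (E : H →ₗ[ℂ] H))ᗮ ≤ M := fun E hE =>
    le_trans (le_iSup₂ (f := fun (E : H →L[ℂ] H) (_ : E ∈ 𝓕) => (LinearMap.ker (E : H →ₗ[ℂ] H))ᗮ) E hE)
      (Submodule.le_topologicalClosure _)
  -- `M ⊆ (ker U)ᗮ`
  have hMU : M ≤ (LinearMap.ker (U : H →ₗ[ℂ] H))ᗮ := by
    apply Submodule.topologicalClosure_minimal
    · refine iSup₂_le fun E hE x hx => ?_
      apply mem_orthogonal_ker_of_norm_eq U hU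
      rw [hUub E hE x hx]
      exact h𝓕 E hE x hx
    · exact Submodule.isClosed_orthogonal (LinearMap.ker (U : H →ₗ[ℂ] H))
  set P : H →L[ℂ] H := M.subtypeL.comp M.orthogonalProjectionOnto with hPdef
  set S : H →L[ℂ] H := U.comp P with hSdef
  have hPx : ∀ x ∈ M, P x = x := fun x hx => Submodule.starProjection_eq_self_iff.mpr hx
  have hSx : ∀ x ∈ M, S x = U x := fun x hx => by
    simp only [hSdef, ContinuousLinearMap.comp_apply, hPx x hx]
  -- kernel of `S` is `Mᗮ`
  have hkerS : LinearMap.ker (S : H →ₗ[ℂ] H) = Mᗮ := by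
    ext x
    constructor
    · intro hx
      have hUx : U (P x) = 0 := hx
      have hPM : (P x : H) ∈ M := (M.orthogonalProjectionOnto x).2
      have hPker : (P x : H) ∈ LinearMap.ker (U : H →ₗ[ℂ] H) := hUx
      have : (P x : H) = 0 := by
        have h1 := hMU hPM
        have := h1 (P x) hPker
        simpa using this
      simp only [hPdef, ContinuousLinearMap.comp_apply, Submodule.subtypeL_apply] at this
      exact Submodule.orthogonalProjectionOnto_eq_zero_iff.mp (Submodule.coe_eq_zero.mp this)
    · intro hx
      have : M.orthogonalProjectionOnto x = 0 := Submodule.orthogonalProjectionOnto_eq_zero_iff.mpr hx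
      show U (P x) = 0
      simp [hPdef, this]
  have hkerSorth : (LinearMap.ker (S : H →ₗ[ℂ] H))ᗮ = M := by
    rw [hkerS, Submodule.orthogonal_orthogonal]
  refine ⟨S, ?_, ?_, ?_⟩
  · intro x hx
    rw [hkerSorth] at hx
    rw [hSx x hx]
    exact hU x (hMU hx)
  · intro E hE x hx
    have hxM : x ∈ M := hEle E hE hx
    rw [hSx x hxM, hUub E hE x hx]
  · intro W _ hWub x hx
    rw [hkerSorth] at hx
    -- agreement set is the kernel of `W - S`, a closed submodule containing each initial space
    have hle : M ≤ LinearMap.ker ((W - S : H →L[ℂ] H) : H →ₗ[ℂ] H) := by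
      apply Submodule.topologicalClosure_minimal
      · refine iSup₂_le fun E hE y hy => ?_
        have h1 : W y = E y := hWub E hE y hy
        have h2 : S y = E y := by
          rw [hSx y (hEle E hE hy)]
          exact hUub E hE y hy
        simp [LinearMap.mem_ker, h1, h2]
      · exact ContinuousLinearMap.isClosed_ker (W - S)
    have := hle hx
    have hWS : W x - S x = 0 := this
    exact sub_eq_zero.mp hWS
end

section
/- Every totally ordered family of partial isometries on a complex Hilbert space (in the Halmos–McLaughlin order) has an upper bound, hence a supremum, in the Halmos–McLaughlin order. -/
open ContinuousLinearMap

variable {H : Type*} [NormedAddCommGroup H] [InnerProductSpace ℂ H] [CompleteSpace H]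

/-- If `E ≤ F` in the Halmos–McLaughlin order (both partial isometries), then the
initial space of `E` is contained in the initial space of `F`. -/
lemma HMle.initial_le {E F : H →L[ℂ] H} (hE : IsPartialIsometry E)
    (hF : IsPartialIsometry F) (h : HMle E F) :
    (LinearMap.ker (E : H →ₗ[ℂ] H))ᗮ ≤ (LinearMap.ker (F : H →ₗ[ℂ] H))ᗮ := by
  intro x hx
  haveI : CompleteSpace (LinearMap.ker (F : H →ₗ[ℂ] H)) := (ContinuousLinearMap.isClosed_ker F).completeSpace_coe
  obtain ⟨y, hy, z, hz, hxyz⟩ := (LinearMap.ker (F : H →ₗ[ℂ] H)).exists_add_mem_mem_orthogonal x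
  have hFz : F x = F z := by
    rw [hxyz, map_add, show F y = 0 from LinearMap.mem_ker.mp hy, zero_add]
  have hnx : ‖F x‖ = ‖x‖ := by rw [h x hx, hE x hx]
  have hnz : ‖F z‖ = ‖z‖ := hF z hz
  have hinner : (inner ℂ y z : ℂ) = 0 := hz y hy
  have hpyth : ‖x‖ * ‖x‖ = ‖y‖ * ‖y‖ + ‖z‖ * ‖z‖ := by
    rw [hxyz]
    exact norm_add_sq_eq_norm_sq_add_norm_sq_of_inner_eq_zero y z hinner
  have hxz : ‖x‖ = ‖z‖ := by rw [← hnx, hFz, hnz]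
  rw [hxz] at hpyth
  have hy0 : ‖y‖ * ‖y‖ = 0 := by linarith
  have : y = 0 := norm_eq_zero.mp (mul_self_eq_zero.mp hy0)
  rw [hxyz, this, zero_add]
  exact hz

theorem exists_supremum_of_totallyOrdered (𝓕 : Set (H →L[ℂ] H))
    (h𝓕 : ∀ V ∈ 𝓕, IsPartialIsometry V)
    (hTO : ∀ E ∈ 𝓕, ∀ F ∈ 𝓕, HMle E F ∨ HMle F E) :
    (∃ U : H →L[ℂ] H, IsPartialIsometry U ∧ ∀ E ∈ 𝓕, HMle E U) ∧
    ∃ S : H →L[ℂ] H, IsPartialIsometry S ∧ (∀ E ∈ 𝓕, HMle E S) ∧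
      ∀ W : H →L[ℂ] H, IsPartialIsometry W → (∀ E ∈ 𝓕, HMle E W) → HMle S W := by
  classical
  by_cases hne : 𝓕.Nonempty
  · -- nonempty case : build the supremum by extending the common restriction
    haveI : Nonempty 𝓕 := hne.to_subtype
    set 𝒦 : 𝓕 → Submodule ℂ H := fun E => (LinearMap.ker ((E : H →L[ℂ] H) : H →ₗ[ℂ] H))ᗮ with h𝒦
    have hdir : Directed (· ≤ ·) 𝒦 := by
      intro E F
      rcases hTO E E.2 F F.2 with h | h
      · exact ⟨F, HMle.initial_le (h𝓕 _ E.2) (h𝓕 _ F.2) h, le_refl _⟩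
      · exact ⟨E, le_refl _, HMle.initial_le (h𝓕 _ F.2) (h𝓕 _ E.2) h⟩
    set K : Submodule ℂ H := ⨆ E, 𝒦 E with hKdef
    have hmemK : ∀ x : H, x ∈ K ↔ ∃ E, x ∈ 𝒦 E := fun x =>
      Submodule.mem_iSup_of_directed 𝒦 hdir
    -- consistency of values on common initial spaces
    have hconsist : ∀ (E : 𝓕) (x : H), x ∈ 𝒦 E → ∀ F : 𝓕, x ∈ 𝒦 F →
        (E : H →L[ℂ] H) x = (F : H →L[ℂ] H) x := by
      intro E x hxE F hxF
      rcases hTO E E.2 F F.2 with h | h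
      · exact (h x hxE).symm
      · exact h x hxF
    choose pick hpick using fun x : K => (hmemK x).mp x.2
    have hpickeq : ∀ (x : K) (E : 𝓕), (x : H) ∈ 𝒦 E →
        ((pick x : 𝓕) : H →L[ℂ] H) x = (E : H →L[ℂ] H) x :=
      fun x E hx => hconsist _ _ (hpick x) E hx
    -- the common restriction as a linear map on K
    let T0 : K →ₗ[ℂ] H :=
      { toFun := fun x => ((pick x : 𝓕) : H →L[ℂ] H) x
        map_add' := by
          intro x y
          rcases hdir (pick x) (pick y) with ⟨D, hDx, hDy⟩
          have hx : (x : H) ∈ 𝒦 D := hDx (hpick x)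
          have hy : (y : H) ∈ 𝒦 D := hDy (hpick y)
          have hxy : ((x + y : K) : H) ∈ 𝒦 D := by
            rw [Submodule.coe_add]; exact add_mem hx hy
          show ((pick (x + y) : 𝓕) : H →L[ℂ] H) ((x + y : K) : H) =
            ((pick x : 𝓕) : H →L[ℂ] H) (x : H) + ((pick y : 𝓕) : H →L[ℂ] H) (y : H)
          rw [hpickeq (x + y) D hxy, hpickeq x D hx, hpickeq y D hy,
            Submodule.coe_add, map_add]
        map_smul' := by
          intro c x
          have hx : ((c • x : K) : H) ∈ 𝒦 (pick x) := by
            rw [Submodule.coe_smul]; exact Submodule.smul_mem _ _ (hpick x)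
          show ((pick (c • x) : 𝓕) : H →L[ℂ] H) ((c • x : K) : H) =
            (RingHom.id ℂ) c • ((pick x : 𝓕) : H →L[ℂ] H) (x : H)
          rw [hpickeq (c • x) (pick x) hx, Submodule.coe_smul, map_smul]
          rfl }
    have hT0norm : ∀ x : K, ‖T0 x‖ = ‖x‖ := by
      intro x
      exact h𝓕 _ (pick x).2 _ (hpick x)
    let T : K →L[ℂ] H := T0.mkContinuous 1 (fun x => by rw [hT0norm, one_mul])
    have hTval : ∀ x : K, T x = T0 x := fun x => rfl
    set M : Submodule ℂ H := K.topologicalClosure with hMdef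
    haveI : CompleteSpace M := K.isClosed_topologicalClosure.completeSpace_coe
    let incl : K →L[ℂ] M :=
      (K.subtypeL).codRestrict M (fun x => K.le_topologicalClosure x.2)
    have hincl : ∀ x : K, ((incl x : M) : H) = (x : H) := fun x => rfl
    have hdense : DenseRange incl := by
      intro m
      rw [closure_subtype]
      have himg : (Subtype.val '' Set.range incl) = (K : Set H) := by
        ext z
        constructor
        · rintro ⟨w, ⟨u, rfl⟩, rfl⟩
          exact u.2
        · intro hz
          exact ⟨incl ⟨z, hz⟩, ⟨⟨z, hz⟩, rfl⟩, rfl⟩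
      rw [himg]
      have : (m : H) ∈ M := m.2
      rwa [hMdef, ← Submodule.topologicalClosure_coe] at *
    have huni : IsUniformInducing incl := by
      have : Isometry incl := fun x y => rfl
      exact this.isUniformInducing
    let U0 : M →L[ℂ] H := T.extend incl
    have hU0K : ∀ x : K, U0 (incl x) = T x := fun x =>
      ContinuousLinearMap.extend_eq (f := T) (e := incl) hdense huni x
    have hU0norm : ∀ m : M, ‖U0 m‖ = ‖m‖ := by
      have hcl : IsClosed {m : M | ‖U0 m‖ = ‖m‖} :=
        isClosed_eq (continuous_norm.comp U0.continuous)
          continuous_norm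
      intro m
      refine hdense.induction_on m hcl ?_
      intro x
      show ‖U0 (incl x)‖ = ‖incl x‖
      rw [hU0K, hTval, hT0norm]
      rfl
    let U : H →L[ℂ] H := U0.comp (M.orthogonalProjectionOnto)
    have hUval : ∀ x ∈ M, ∀ (hx : x ∈ M), U x = U0 ⟨x, hx⟩ := by
      intro x hxM hx
      show U0 (M.orthogonalProjectionOnto x) = U0 ⟨x, hx⟩
      congr 1
      exact Subtype.ext ((Submodule.starProjection_eq_self_iff (K := M)).mpr hx)
    have hkerU : LinearMap.ker (U : H →ₗ[ℂ] H) = Mᗮ := by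
      ext x
      rw [LinearMap.mem_ker]
      constructor
      · intro hx
        have : ‖U0 (M.orthogonalProjectionOnto x)‖ = 0 := by
          rw [show U0 (M.orthogonalProjectionOnto x) = U x from rfl, show U x = 0 from hx, norm_zero]
        rw [hU0norm] at this
        have : M.orthogonalProjectionOnto x = 0 := by
          rwa [norm_eq_zero] at this
        exact Submodule.orthogonalProjectionOnto_eq_zero_iff.mp this
      · intro hx
        show U0 (M.orthogonalProjectionOnto x) = 0
        rw [Submodule.orthogonalProjectionOnto_eq_zero_iff.mpr hx, map_zero]
    have hinit : (LinearMap.ker (U : H →ₗ[ℂ] H))ᗮ = M := by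
      rw [hkerU, Submodule.orthogonal_orthogonal]
    have hUpi : IsPartialIsometry U := by
      intro x hx
      rw [hinit] at hx
      rw [hUval x hx hx, hU0norm]
      rfl
    have hUK : ∀ (x : H) (hx : x ∈ K), U x = T0 ⟨x, hx⟩ := by
      intro x hx
      have hxM : x ∈ M := K.le_topologicalClosure hx
      rw [hUval x hxM hxM]
      have : (⟨x, hxM⟩ : M) = incl ⟨x, hx⟩ := Subtype.ext rfl
      rw [this, hU0K, hTval]
    have hUub : ∀ E ∈ 𝓕, HMle E U := by
      intro E hE x hx
      have hxK : x ∈ K := (hmemK x).mpr ⟨⟨E, hE⟩, hx⟩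
      rw [hUK x hxK]
      exact hpickeq ⟨x, hxK⟩ ⟨E, hE⟩ hx
    refine ⟨⟨U, hUpi, hUub⟩, U, hUpi, hUub, ?_⟩
    intro W hW hWub x hx
    rw [hinit] at hx
    have hKN : K ≤ LinearMap.ker ((W - U : H →L[ℂ] H) : H →ₗ[ℂ] H) := by
      intro y hy
      obtain ⟨E, hyE⟩ := (hmemK y).mp hy
      rw [LinearMap.mem_ker, ContinuousLinearMap.coe_coe, ContinuousLinearMap.sub_apply,
        hWub E E.2 y hyE, hUub E E.2 y hyE, sub_self]
    have hMN : M ≤ LinearMap.ker ((W - U : H →L[ℂ] H) : H →ₗ[ℂ] H) :=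
      K.topologicalClosure_minimal hKN (ContinuousLinearMap.isClosed_ker _)
    have := hMN hx
    rw [LinearMap.mem_ker, ContinuousLinearMap.coe_coe, ContinuousLinearMap.sub_apply, sub_eq_zero] at this
    exact this
  · -- empty case : 0 works
    rw [Set.not_nonempty_iff_eq_empty] at hne
    subst hne
    have h0 : IsPartialIsometry (0 : H →L[ℂ] H) := by
      intro x hx
      have : (LinearMap.ker ((0 : H →L[ℂ] H) : H →ₗ[ℂ] H))ᗮ = ⊥ := by
        have h1 : LinearMap.ker ((0 : H →L[ℂ] H) : H →ₗ[ℂ] H) = ⊤ := by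
          ext y; simp [LinearMap.mem_ker]
        rw [h1, Submodule.top_orthogonal_eq_bot]
      rw [this, Submodule.mem_bot] at hx
      subst hx
      simp
    refine ⟨⟨0, h0, by simp⟩, 0, h0, by simp, ?_⟩
    intro W _ _ x hx
    have : (LinearMap.ker ((0 : H →L[ℂ] H) : H →ₗ[ℂ] H))ᗮ = ⊥ := by
      have h1 : LinearMap.ker ((0 : H →L[ℂ] H) : H →ₗ[ℂ] H) = ⊤ := by
        ext y; simp [LinearMap.mem_ker]
      rw [h1, Submodule.top_orthogonal_eq_bot]
    rw [this, Submodule.mem_bot] at hx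
    subst hx
    simp
end

section
/- If F is a totally ordered family of partial isometries on a complex Hilbert space H, then each element E of F preserves F, i.e., for all F' ∈ F, E maps the initial space of F' into the final space of F'. -/
open ContinuousLinearMap

variable {H : Type*} [NormedAddCommGroup H] [InnerProductSpace ℂ H] [CompleteSpace H]

theorem mem_preserves_of_totallyOrdered (𝓕 : Set (H →L[ℂ] H))
    (h𝓕 : ∀ V ∈ 𝓕, IsPartialIsometry V)
    (hTO : ∀ E ∈ 𝓕, ∀ F ∈ 𝓕, HMle E F ∨ HMle F E)
    (E : H →L[ℂ] H) (hE : E ∈ 𝓕) :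
    ∀ F' ∈ 𝓕, ∀ x ∈ (LinearMap.ker (F' : H →ₗ[ℂ] H))ᗮ,
      E x ∈ closure (LinearMap.range (F' : H →ₗ[ℂ] H) : Set H) := by
  intro F' hF' x hx
  rcases hTO E hE F' hF' with h | h
  · -- F' agrees with E on (ker E)ᗮ; decompose x along ker E
    have hclosed : IsClosed (LinearMap.ker (E : H →ₗ[ℂ] H) : Set H) := isClosed_ker E
    haveI : CompleteSpace (LinearMap.ker (E : H →ₗ[ℂ] H)) := hclosed.completeSpace_coe
    set P := Submodule.orthogonalProjectionOnto (LinearMap.ker (E : H →ₗ[ℂ] H))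
    have hmem : x - (P x : H) ∈ (LinearMap.ker (E : H →ₗ[ℂ] H))ᗮ :=
      Submodule.sub_starProjection_mem_orthogonal x
    have h1 : E x = E (x - (P x : H)) := by
      have : E ((P x : H)) = 0 := (P x).2
      rw [map_sub, this, sub_zero]
    have h2 : F' (x - (P x : H)) = E (x - (P x : H)) := h _ hmem
    apply subset_closure
    exact ⟨x - (P x : H), by rw [ContinuousLinearMap.coe_coe, h2, h1]⟩
  · -- E agrees with F' on (ker F')ᗮ
    apply subset_closure
    exact ⟨x, (h x hx).symm⟩
end

section
/- Let F be a totally ordered family of partial isometries on H such that for every E ∈ F, either ran E ⊆ (ker E)ᗮ or ran E is dense in H. Then the set A_F of operators mapping, for every E ∈ F, the initial space of E into the final space of E is closed under operator composition, i.e., A_F is a subalgebra of B(H). -/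
open ContinuousLinearMap

variable {H : Type*} [NormedAddCommGroup H] [InnerProductSpace ℂ H] [CompleteSpace H]

theorem AF_closed_under_composition (𝓕 : Set (H →L[ℂ] H))
    (h𝓕 : ∀ V ∈ 𝓕, IsPartialIsometry V)
    (hTO : ∀ E ∈ 𝓕, ∀ F ∈ 𝓕, HMle E F ∨ HMle F E)
    (hrange : ∀ E ∈ 𝓕, LinearMap.range (E : H →ₗ[ℂ] H) ≤ (LinearMap.ker (E : H →ₗ[ℂ] H))ᗮ ∨
      Dense (LinearMap.range (E : H →ₗ[ℂ] H) : Set H))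
    (S T : H →L[ℂ] H)
    (hS : ∀ E ∈ 𝓕, ∀ x ∈ (LinearMap.ker (E : H →ₗ[ℂ] H))ᗮ, S x ∈ closure (LinearMap.range (E : H →ₗ[ℂ] H) : Set H))
    (hT : ∀ E ∈ 𝓕, ∀ x ∈ (LinearMap.ker (E : H →ₗ[ℂ] H))ᗮ, T x ∈ closure (LinearMap.range (E : H →ₗ[ℂ] H) : Set H)) :
    ∀ E ∈ 𝓕, ∀ x ∈ (LinearMap.ker (E : H →ₗ[ℂ] H))ᗮ,
      (S ∘L T) x ∈ closure (LinearMap.range (E : H →ₗ[ℂ] H) : Set H) := by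
  intro E hE x hx
  rcases hrange E hE with h | h
  · have hcl : closure (LinearMap.range (E : H →ₗ[ℂ] H) : Set H) ⊆ ((LinearMap.ker (E : H →ₗ[ℂ] H))ᗮ : Set H) :=
      closure_minimal (fun y hy => h hy) (LinearMap.ker (E : H →ₗ[ℂ] H)).isClosed_orthogonal
    exact hS E hE _ (hcl (hT E hE x hx))
  · simp [h.closure_eq]
end

section
/- Let x = (x₁,…,x_n) and y = (y₁,…,y_n) be vectors in ℂⁿ and K ≥ 0 such that for every 1 ≤ r ≤ n, ∑_{i=r}^{n} |y_i|² ≤ K² ∑_{i=r}^{n} |x_i|². Then there exists an upper triangular n×n complex matrix A with operator norm ‖A‖ ≤ K and A x = y. -/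
open Matrix Finset

private lemma dot_self_eq (m : ℕ) (w : Fin m → ℂ) :
    star w ⬝ᵥ w = ((∑ i, ‖w i‖ ^ 2 : ℝ) : ℂ) := by
  push_cast
  simp only [dotProduct, Pi.star_apply]
  exact Finset.sum_congr rfl fun i _ => RCLike.conj_mul (w i)

private lemma sum_Ici_succ {M : Type*} [AddCommMonoid M] {n : ℕ} (f : Fin (n + 1) → M)
    (r : Fin n) : ∑ i ∈ Finset.Ici r.succ, f i = ∑ i ∈ Finset.Ici r, f i.succ := by
  rw [show Finset.Ici r.succ = (Finset.Ici r).map ⟨Fin.succ, Fin.succ_injective n⟩ by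
    ext i
    simp only [Finset.mem_map, Finset.mem_Ici, Function.Embedding.coeFn_mk]
    constructor
    · intro hi
      have hne : i ≠ 0 := by
        rintro rfl
        exact absurd hi (by simp [Fin.le_def])
      obtain ⟨j, rfl⟩ := Fin.eq_succ_of_ne_zero hne
      exact ⟨j, Fin.succ_le_succ_iff.mp hi, rfl⟩
    · rintro ⟨j, hj, rfl⟩
      exact Fin.succ_le_succ_iff.mpr hj]
  rw [Finset.sum_map]
  rfl

private lemma aux (K : ℝ) (hK : 0 ≤ K) : ∀ (n : ℕ) (x y : Fin n → ℂ),
    (∀ r : Fin n, ∑ i ∈ Finset.Ici r, ‖y i‖ ^ 2 ≤ K ^ 2 * ∑ i ∈ Finset.Ici r, ‖x i‖ ^ 2) →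
    ∃ A : Matrix (Fin n) (Fin n) ℂ, (∀ i j : Fin n, j < i → A i j = 0) ∧
      (∀ v : Fin n → ℂ, ∑ i, ‖A.mulVec v i‖ ^ 2 ≤ K ^ 2 * ∑ i, ‖v i‖ ^ 2) ∧ A.mulVec x = y := by
  intro n
  induction n with
  | zero =>
    intro x y _
    exact ⟨0, fun i => i.elim0, fun v => by simp, funext fun i => i.elim0⟩
  | succ n ih =>
    intro x y h
    set x' : Fin n → ℂ := x ∘ Fin.succ with hx'
    set y' : Fin n → ℂ := y ∘ Fin.succ with hy'
    obtain ⟨B, hBtri, hBnorm, hBvec⟩ := ih x' y' (by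
      intro r
      have := h r.succ
      rwa [sum_Ici_succ (fun i => ‖y i‖ ^ 2) r, sum_Ici_succ (fun i => ‖x i‖ ^ 2) r] at this)
    -- B with a zero column prepended
    set Bh : Matrix (Fin n) (Fin (n + 1)) ℂ := Matrix.of (fun i => Fin.cons 0 (B i)) with hBh
    have hBhmul : ∀ v : Fin (n + 1) → ℂ, Bh.mulVec v = B.mulVec (v ∘ Fin.succ) := by
      intro v
      funext i
      simp [Bh, Matrix.mulVec, dotProduct, Fin.sum_univ_succ]
    -- the quadratic form is nonnegative
    have hq0 : ∀ v : Fin (n + 1) → ℂ,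
        0 ≤ K ^ 2 * ∑ i, ‖v i‖ ^ 2 - ∑ i, ‖Bh.mulVec v i‖ ^ 2 := by
      intro v
      have h1 := hBnorm (v ∘ Fin.succ)
      have h2 : ∑ i, ‖(v ∘ Fin.succ) i‖ ^ 2 ≤ ∑ i, ‖v i‖ ^ 2 := by
        rw [Fin.sum_univ_succ]
        have : (0:ℝ) ≤ ‖v 0‖ ^ 2 := by positivity
        simp only [Function.comp_apply]
        linarith
      have h3 := mul_le_mul_of_nonneg_left h2 (sq_nonneg K)
      rw [hBhmul]
      linarith
    -- the sesquilinear form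
    set φ : (Fin (n + 1) → ℂ) → (Fin (n + 1) → ℂ) → ℂ :=
      fun u v => (K : ℂ) ^ 2 * (star u ⬝ᵥ v) - (star (Bh.mulVec u) ⬝ᵥ Bh.mulVec v) with hφ
    have hφdiag : ∀ v, φ v v =
        ((K ^ 2 * ∑ i, ‖v i‖ ^ 2 - ∑ i, ‖Bh.mulVec v i‖ ^ 2 : ℝ) : ℂ) := by
      intro v
      rw [hφ]
      simp only
      rw [dot_self_eq, dot_self_eq]
      push_cast
      ring
    have hherm : ∀ u v : Fin (n + 1) → ℂ, star (φ u v) = φ v u := by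
      intro u v
      rw [hφ]
      simp only
      rw [star_sub, star_mul', ← Matrix.star_dotProduct, ← Matrix.star_dotProduct]
      congr 1
      rw [show star ((K : ℂ) ^ 2) = (K : ℂ) ^ 2 by
        rw [star_pow, Complex.star_def, Complex.conj_ofReal]]
    -- an opaque name for the key quantity
    obtain ⟨s, hs⟩ : ∃ s : ℝ, s = K ^ 2 * ∑ i, ‖x i‖ ^ 2 - ∑ i, ‖Bh.mulVec x i‖ ^ 2 := ⟨_, rfl⟩
    have hs0 : 0 ≤ s := hs ▸ hq0 x
    have hφxx : φ x x = (s : ℂ) := by rw [hφdiag x, ← hs]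
    -- |y 0|^2 ≤ s
    have hy0 : ‖y 0‖ ^ 2 ≤ s := by
      have h0 := h 0
      rw [show Finset.Ici (0 : Fin (n + 1)) = Finset.univ by ext i; simp [Fin.zero_le]] at h0
      have e1 : ∑ i, ‖y i‖ ^ 2 = ‖y 0‖ ^ 2 + ∑ i, ‖B.mulVec x' i‖ ^ 2 := by
        rw [Fin.sum_univ_succ, hBvec]
        rfl
      rw [e1] at h0
      rw [hs, hBhmul]
      linarith
    -- Cauchy-Schwarz
    have hCS : ∀ v : Fin (n + 1) → ℂ, s * ‖φ x v‖ ^ 2 ≤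
        s ^ 2 * (K ^ 2 * ∑ i, ‖v i‖ ^ 2 - ∑ i, ‖Bh.mulVec v i‖ ^ 2) := by
      intro v
      set t : ℂ := φ x v with ht
      set w : Fin (n + 1) → ℂ := (s : ℂ) • v - t • x with hwdef
      have hexp : φ w w = (s : ℂ) * (s : ℂ) * φ v v - (s : ℂ) * t * φ v x
          - star t * (s : ℂ) * φ x v + star t * t * φ x x := by
        rw [hwdef, hφ]
        simp only [star_sub, star_smul, Matrix.mulVec_sub, Matrix.mulVec_smul,
          sub_dotProduct, dotProduct_sub, smul_dotProduct,
          dotProduct_smul, smul_eq_mul, star_trivial, RCLike.star_def,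
          Complex.conj_ofReal]
        ring
      have hvx : φ v x = star t := (hherm x v).symm
      rw [hvx, hφxx, ← ht] at hexp
      have htt : star t * t = ((‖t‖ ^ 2 : ℝ) : ℂ) := by
        rw [Complex.ofReal_pow]; exact RCLike.conj_mul t
      have hexp2 : φ w w = (s : ℂ) * (s : ℂ) * φ v v - (s : ℂ) * (star t * t) := by
        rw [hexp]; ring
      have hexp3 : φ w w = ((s * s * (K ^ 2 * ∑ i, ‖v i‖ ^ 2 - ∑ i, ‖Bh.mulVec v i‖ ^ 2)
          - s * ‖t‖ ^ 2 : ℝ) : ℂ) := by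
        rw [hexp2, hφdiag v, htt]
        push_cast
        ring
      have hww := hφdiag w
      rw [hexp3] at hww
      have hreal : s * s * (K ^ 2 * ∑ i, ‖v i‖ ^ 2 - ∑ i, ‖Bh.mulVec v i‖ ^ 2) - s * ‖t‖ ^ 2
          = K ^ 2 * ∑ i, ‖w i‖ ^ 2 - ∑ i, ‖Bh.mulVec w i‖ ^ 2 :=
        Complex.ofReal_injective hww
      have hqw := hq0 w
      nlinarith [hqw, hreal]
    -- the first row
    set c : Fin (n + 1) → ℂ :=
      (K : ℂ) ^ 2 • star x - Matrix.vecMul (star (Bh.mulVec x)) Bh with hc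
    set a : Fin (n + 1) → ℂ := (y 0 / (s : ℂ)) • c with ha
    have ha_dot : ∀ v, a ⬝ᵥ v = (y 0 / (s : ℂ)) * φ x v := by
      intro v
      rw [ha, smul_dotProduct, hc, sub_dotProduct, smul_dotProduct,
        ← Matrix.dotProduct_mulVec, hφ]
      simp only [smul_eq_mul]
    have hy0z : s = 0 → y 0 = 0 := by
      intro hsz
      have h1 : ‖y 0‖ ^ 2 ≤ 0 := by rw [← hsz]; exact hy0
      have h2 : ‖y 0‖ = 0 := by nlinarith [norm_nonneg (y 0)]
      exact norm_eq_zero.mp h2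
    have ha_x : a ⬝ᵥ x = y 0 := by
      rw [ha_dot, hφxx]
      rcases eq_or_lt_of_le hs0 with hsz | hsp
      · simp [hy0z hsz.symm]
      · have hsne : (s : ℂ) ≠ 0 := Complex.ofReal_ne_zero.mpr (ne_of_gt hsp)
        exact div_mul_cancel₀ (y 0) hsne
    have ha_bound : ∀ v : Fin (n + 1) → ℂ, ‖a ⬝ᵥ v‖ ^ 2 ≤
        K ^ 2 * ∑ i, ‖v i‖ ^ 2 - ∑ i, ‖Bh.mulVec v i‖ ^ 2 := by
      intro v
      rcases eq_or_lt_of_le hs0 with hsz | hsp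
      · rw [ha_dot, hy0z hsz.symm]
        simpa using hq0 v
      · rw [ha_dot]
        have hnorm_eq : ‖y 0 / (s : ℂ) * φ x v‖ ^ 2 = ‖y 0‖ ^ 2 / s ^ 2 * ‖φ x v‖ ^ 2 := by
          rw [norm_mul, norm_div, Complex.norm_real, Real.norm_eq_abs, abs_of_pos hsp,
            mul_pow, div_pow]
        rw [hnorm_eq]
        have hqv := hq0 v
        have h1 : ‖φ x v‖ ^ 2 ≤
            s * (K ^ 2 * ∑ i, ‖v i‖ ^ 2 - ∑ i, ‖Bh.mulVec v i‖ ^ 2) := by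
          have h2 : s * ‖φ x v‖ ^ 2 ≤
              s * (s * (K ^ 2 * ∑ i, ‖v i‖ ^ 2 - ∑ i, ‖Bh.mulVec v i‖ ^ 2)) := by
            nlinarith [hCS v]
          exact le_of_mul_le_mul_left h2 hsp
        calc ‖y 0‖ ^ 2 / s ^ 2 * ‖φ x v‖ ^ 2
            ≤ ‖y 0‖ ^ 2 / s ^ 2 *
              (s * (K ^ 2 * ∑ i, ‖v i‖ ^ 2 - ∑ i, ‖Bh.mulVec v i‖ ^ 2)) := by
              apply mul_le_mul_of_nonneg_left h1
              positivity
          _ = ‖y 0‖ ^ 2 / s * (K ^ 2 * ∑ i, ‖v i‖ ^ 2 - ∑ i, ‖Bh.mulVec v i‖ ^ 2) := by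
              rw [pow_two]
              field_simp
          _ ≤ 1 * (K ^ 2 * ∑ i, ‖v i‖ ^ 2 - ∑ i, ‖Bh.mulVec v i‖ ^ 2) := by
              apply mul_le_mul_of_nonneg_right _ hqv
              rw [div_le_one hsp]
              exact hy0
          _ = _ := one_mul _
    -- assemble the matrix
    obtain ⟨A, hA⟩ : ∃ A : Matrix (Fin (n + 1)) (Fin (n + 1)) ℂ,
        A = Matrix.of (Fin.cons a (fun i => Bh i)) := ⟨_, rfl⟩
    have hA0 : ∀ j, A 0 j = a j := fun j => by rw [hA]; rfl
    have hAs : ∀ i j, A i.succ j = Bh i j := fun i j => by rw [hA]; rfl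
    have hAmul : ∀ v : Fin (n + 1) → ℂ,
        A.mulVec v = Fin.cons (a ⬝ᵥ v) (B.mulVec (v ∘ Fin.succ)) := by
      intro v
      funext i
      refine Fin.cases ?_ (fun i' => ?_) i
      · have e0 : (A.mulVec v) 0 = A 0 ⬝ᵥ v := rfl
        rw [Fin.cons_zero, e0, show A 0 = a from funext hA0]
      · have e1 : (A.mulVec v) i'.succ = A i'.succ ⬝ᵥ v := rfl
        rw [Fin.cons_succ, e1, show A i'.succ = Bh i' from funext (hAs i')]
        exact congrFun (hBhmul v) i'
    refine ⟨A, ?_, ?_, ?_⟩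
    · intro i j hij
      rcases Fin.eq_zero_or_eq_succ i with rfl | ⟨i', rfl⟩
      · exact absurd hij (Fin.not_lt_zero j)
      · rw [hAs]
        rcases Fin.eq_zero_or_eq_succ j with rfl | ⟨j', rfl⟩
        · rfl
        · simp [Bh, hBtri i' j' (Fin.succ_lt_succ_iff.mp hij)]
    · intro v
      rw [hAmul v, Fin.sum_univ_succ]
      simp only [Fin.cons_zero, Fin.cons_succ]
      have hb := ha_bound v
      have hbb : ∑ i, ‖Bh.mulVec v i‖ ^ 2 = ∑ i, ‖B.mulVec (v ∘ Fin.succ) i‖ ^ 2 := by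
        rw [hBhmul]
      rw [Fin.sum_univ_succ (fun i => ‖v i‖ ^ 2)] at hb ⊢
      linarith [hb, hbb]
    · rw [hAmul x]
      funext i
      refine Fin.cases ?_ (fun i' => ?_) i
      · rw [Fin.cons_zero]
        exact ha_x
      · rw [Fin.cons_succ, ← hx', hBvec]
        rfl

theorem upperTriangular_solve (n : ℕ) (x y : Fin n → ℂ) (K : ℝ) (hK : 0 ≤ K)
    (h : ∀ r : Fin n, ∑ i ∈ Finset.Ici r, ‖y i‖ ^ 2 ≤ K ^ 2 * ∑ i ∈ Finset.Ici r, ‖x i‖ ^ 2) :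
    ∃ A : Matrix (Fin n) (Fin n) ℂ, (∀ i j : Fin n, j < i → A i j = 0) ∧
      ‖Matrix.toEuclideanCLM (𝕜 := ℂ) A‖ ≤ K ∧ A.mulVec x = y := by
  obtain ⟨A, htri, hnorm, hvec⟩ := aux K hK n x y h
  refine ⟨A, htri, ?_, hvec⟩
  rw [ContinuousLinearMap.opNorm_le_iff hK]
  intro v
  have h1 : Matrix.toEuclideanCLM (𝕜 := ℂ) A v =
      (WithLp.equiv 2 _).symm (A.mulVec (WithLp.equiv 2 _ v)) := by
    rfl
  rw [h1]
  set w : Fin n → ℂ := WithLp.equiv 2 _ v with hw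
  have hv : ‖v‖ = Real.sqrt (∑ i, ‖w i‖ ^ 2) := EuclideanSpace.norm_eq v
  have hAv : ‖(WithLp.equiv 2 (Fin n → ℂ)).symm (A.mulVec w)‖
      = Real.sqrt (∑ i, ‖A.mulVec w i‖ ^ 2) := EuclideanSpace.norm_eq _
  rw [hAv, hv, show K * Real.sqrt (∑ i, ‖w i‖ ^ 2) = Real.sqrt (K ^ 2 * ∑ i, ‖w i‖ ^ 2) by
    rw [Real.sqrt_mul (sq_nonneg K), Real.sqrt_sq hK]]
  exact Real.sqrt_le_sqrt (hnorm w)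
end

section
/- Let F be a totally ordered family of partial isometries on H, let A_F be the set of operators mapping each initial space (ker V)ᗮ into the final space closure(ran V) for V ∈ F, and let T ∈ A_F. Then for every partial isometry W obtained as the infimum or supremum (in the Halmos–McLaughlin order) of a subset of F, T also maps (ker W)ᗮ into closure(ran W). Consequently A_F = A_{co(F)}, where co(F) is the smallest complete totally ordered family containing F. -/
open ContinuousLinearMap

variable {H : Type*} [NormedAddCommGroup H] [InnerProductSpace ℂ H] [CompleteSpace H]

/-- `W` is a supremum of `S` among partial isometries, in the Halmos–McLaughlin order. -/
def IsSupHM (S : Set (H →L[ℂ] H)) (W : H →L[ℂ] H) : Prop :=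
  (∀ V ∈ S, HMle V W) ∧ ∀ U : H →L[ℂ] H, IsPartialIsometry U → (∀ V ∈ S, HMle V U) → HMle W U

/-- `W` is an infimum of `S` among partial isometries, in the Halmos–McLaughlin order. -/
def IsInfHM (S : Set (H →L[ℂ] H)) (W : H →L[ℂ] H) : Prop :=
  (∀ V ∈ S, HMle W V) ∧ ∀ U : H →L[ℂ] H, IsPartialIsometry U → (∀ V ∈ S, HMle U V) → HMle U W

set_option linter.unusedSectionVars false

lemma memOrtho_of_norm {W : H →L[ℂ] H} (hW : IsPartialIsometry W) {x : H}
    (h : ‖W x‖ = ‖x‖) : x ∈ (LinearMap.ker (W : H →ₗ[ℂ] H))ᗮ := by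
  obtain ⟨y, hy, z, hz, hx⟩ := (LinearMap.ker (W : H →ₗ[ℂ] H)).exists_add_mem_mem_orthogonal x
  have hWx : W x = W z := by
    rw [hx]; simp [show W y = 0 from LinearMap.mem_ker.mp hy]
  have hinner : (inner ℂ y z : ℂ) = 0 := hz y hy
  have hpyth : ‖x‖ ^ 2 = ‖y‖ ^ 2 + ‖z‖ ^ 2 := by
    have := norm_add_sq_eq_norm_sq_add_norm_sq_of_inner_eq_zero y z hinner
    rw [hx]; ring_nf; ring_nf at this; linarith
  have hz' : ‖W z‖ = ‖z‖ := hW z hz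
  have hxz : ‖x‖ = ‖z‖ := by rw [← h, hWx, hz']
  have hy0 : y = 0 := by
    have hsq : ‖x‖ ^ 2 = ‖z‖ ^ 2 := by rw [hxz]
    have : ‖y‖ ^ 2 = 0 := by linarith
    simpa using pow_eq_zero_iff (n := 2) (by norm_num) |>.mp this
  rw [hx, hy0, zero_add]; exact hz

lemma pi_inj {V : H →L[ℂ] H} (hV : IsPartialIsometry V) {a b : H}
    (ha : a ∈ (LinearMap.ker (V : H →ₗ[ℂ] H))ᗮ) (hb : b ∈ (LinearMap.ker (V : H →ₗ[ℂ] H))ᗮ) (h : V a = V b) : a = b := by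
  have hab : a - b ∈ (LinearMap.ker (V : H →ₗ[ℂ] H))ᗮ := Submodule.sub_mem _ ha hb
  have := hV _ hab
  rw [map_sub, h, sub_self, norm_zero] at this
  exact sub_eq_zero.mp (by simpa [eq_comm] using norm_eq_zero.mp this.symm)

lemma exists_preimage {V : H →L[ℂ] H} {y : H} (hy : y ∈ LinearMap.range (V : H →ₗ[ℂ] H)) :
    ∃ z ∈ (LinearMap.ker (V : H →ₗ[ℂ] H))ᗮ, V z = y := by
  obtain ⟨a, rfl⟩ := hy
  obtain ⟨b, hb, c, hc, rfl⟩ := (LinearMap.ker (V : H →ₗ[ℂ] H)).exists_add_mem_mem_orthogonal a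
  exact ⟨c, hc, by simp [show V b = 0 from LinearMap.mem_ker.mp hb]⟩

lemma range_closed {V : H →L[ℂ] H} (hV : IsPartialIsometry V) :
    IsClosed (LinearMap.range (V : H →ₗ[ℂ] H) : Set H) := by
  set K := (LinearMap.ker (V : H →ₗ[ℂ] H))ᗮ
  let f : K →ₗᵢ[ℂ] H :=
    ⟨(V : H →ₗ[ℂ] H).comp K.subtype, fun x => hV x x.2⟩
  have hr : (LinearMap.range (V : H →ₗ[ℂ] H) : Set H) = Set.range f := by
    ext y
    constructor
    · rintro ⟨a, rfl⟩
      obtain ⟨z, hz, hVz⟩ := exists_preimage (V := V) ⟨a, rfl⟩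
      exact ⟨⟨z, hz⟩, hVz⟩
    · rintro ⟨⟨z, hz⟩, rfl⟩
      exact ⟨z, rfl⟩
  rw [hr]
  exact f.isometry.isClosedEmbedding.isClosed_range

lemma HMle_orthoKer_le {V W : H →L[ℂ] H} (hV : IsPartialIsometry V) (hW : IsPartialIsometry W)
    (h : HMle V W) : (LinearMap.ker (V : H →ₗ[ℂ] H))ᗮ ≤ (LinearMap.ker (W : H →ₗ[ℂ] H))ᗮ := by
  intro x hx
  exact memOrtho_of_norm hW (by rw [h x hx]; exact hV x hx)

lemma HMle_range_le {V W : H →L[ℂ] H} (h : HMle V W) :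
    (LinearMap.range (V : H →ₗ[ℂ] H) : Set H) ⊆ LinearMap.range (W : H →ₗ[ℂ] H) := by
  rintro y hy
  obtain ⟨z, hz, rfl⟩ := exists_preimage hy
  exact ⟨z, (h z hz).symm ▸ rfl⟩

lemma key (𝓕 : Set (H →L[ℂ] H))
    (hpi : ∀ V ∈ 𝓕, IsPartialIsometry V)
    (hTO : ∀ E ∈ 𝓕, ∀ F ∈ 𝓕, HMle E F ∨ HMle F E)
    (T : H →L[ℂ] H)
    (hT : ∀ V ∈ 𝓕, ∀ x ∈ (LinearMap.ker (V : H →ₗ[ℂ] H))ᗮ, T x ∈ closure (LinearMap.range (V : H →ₗ[ℂ] H) : Set H)) :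
    ∀ S ⊆ 𝓕, ∀ W : H →L[ℂ] H, IsPartialIsometry W → (IsInfHM S W ∨ IsSupHM S W) →
      ∀ x ∈ (LinearMap.ker (W : H →ₗ[ℂ] H))ᗮ, T x ∈ closure (LinearMap.range (W : H →ₗ[ℂ] H) : Set H) := by
  intro S hS W hWpi hio x hx
  rcases hio with hinf | hsup
  · -- infimum case
    rcases Set.eq_empty_or_nonempty S with rfl | ⟨V₀, hV₀⟩
    · -- S = ∅ : W extends every partial isometry, so H is trivial-ish at x
      have hker1 : (LinearMap.ker ((1 : H →L[ℂ] H) : H →ₗ[ℂ] H))ᗮ = ⊤ := by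
        have : LinearMap.ker ((1 : H →L[ℂ] H) : H →ₗ[ℂ] H) = ⊥ := by
          ext y; simp [LinearMap.mem_ker]
        rw [this, Submodule.bot_orthogonal_eq_top]
      have hkerm1 : (LinearMap.ker (((-1 : H →L[ℂ] H)) : H →ₗ[ℂ] H))ᗮ = ⊤ := by
        have : LinearMap.ker (((-1 : H →L[ℂ] H)) : H →ₗ[ℂ] H) = ⊥ := by
          ext y; simp [LinearMap.mem_ker]
        rw [this, Submodule.bot_orthogonal_eq_top]
      have h1 : HMle 1 W := hinf.2 1 (fun z _ => by simp) (fun V hV => absurd hV (by simp))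
      have h2 : HMle (-1) W := hinf.2 (-1) (fun z hz => by simp) (fun V hV => absurd hV (by simp))
      have hx0 : x = 0 := by
        have e1 : W x = x := by simpa using h1 x (by rw [hker1]; trivial)
        have e2 : W x = -x := by simpa using h2 x (by rw [hkerm1]; trivial)
        have hxx : x + x = 0 := add_eq_zero_iff_eq_neg.mpr (e1.symm.trans e2)
        have h2x : (2 : ℂ) • x = 0 := by rw [two_smul]; exact hxx
        rcases smul_eq_zero.mp h2x with h | h
        · exact absurd h two_ne_zero
        · exact h
      rw [hx0, map_zero]
      exact subset_closure ⟨0, map_zero W⟩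
    · -- S nonempty
      set N : Submodule ℂ H := ⨅ (V : S), (LinearMap.ker ((V : H →L[ℂ] H) : H →ₗ[ℂ] H))ᗮ with hN
      have hNclosed : IsClosed (N : Set H) := by
        rw [hN, Submodule.iInf_orthogonal]
        exact Submodule.isClosed_orthogonal _
      haveI : CompleteSpace N := hNclosed.completeSpace_coe
      have hmemN : ∀ z, z ∈ N ↔ ∀ V ∈ S, z ∈ (LinearMap.ker (V : H →ₗ[ℂ] H))ᗮ := by
        intro z
        rw [hN, Submodule.mem_iInf]
        exact ⟨fun h V hV => h ⟨V, hV⟩, fun h V => h V V.2⟩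
      have hNle : ∀ V ∈ S, N ≤ (LinearMap.ker (V : H →ₗ[ℂ] H))ᗮ := fun V hV z hz => (hmemN z).1 hz V hV
      have hagree : ∀ V ∈ S, ∀ z ∈ N, V z = V₀ z := by
        intro V hV z hz
        rcases hTO V (hS hV) V₀ (hS hV₀) with h | h
        · exact (h z (hNle V hV hz)).symm
        · exact h z (hNle V₀ hV₀ hz)
      set U : H →L[ℂ] H := V₀.comp (N.subtypeL.comp (Submodule.orthogonalProjectionOnto N)) with hU
      have hUapp : ∀ z, U z = V₀ ((Submodule.orthogonalProjectionOnto N z : H)) := fun z => rfl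
      have hkerU : LinearMap.ker (U : H →ₗ[ℂ] H) = Nᗮ := by
        ext z
        rw [LinearMap.mem_ker, ContinuousLinearMap.coe_coe, hUapp]
        have hn : ‖V₀ ((Submodule.orthogonalProjectionOnto N z : H))‖ = ‖(Submodule.orthogonalProjectionOnto N z : H)‖ :=
          hpi V₀ (hS hV₀) _ (hNle V₀ hV₀ (Submodule.orthogonalProjectionOnto N z).2)
        constructor
        · intro h0
          rw [← Submodule.orthogonalProjectionOnto_eq_zero_iff (K := N), ← Submodule.coe_eq_zero]
          rw [h0, norm_zero] at hn
          exact (norm_eq_zero.mp hn.symm)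
        · intro hz
          have : Submodule.orthogonalProjectionOnto N z = 0 := (Submodule.orthogonalProjectionOnto_eq_zero_iff (K := _)).mpr hz
          rw [this]; simp
      have hkerUo : (LinearMap.ker (U : H →ₗ[ℂ] H))ᗮ = N := by
        rw [hkerU, Submodule.orthogonal_orthogonal]
      have hProj : ∀ z ∈ N, (Submodule.orthogonalProjectionOnto N z : H) = z := fun z hz =>
        Submodule.starProjection_eq_self_iff.mpr hz
      have hUpi : IsPartialIsometry U := by
        intro z hz
        rw [hkerUo] at hz
        rw [hUapp, hProj z hz]
        exact hpi V₀ (hS hV₀) z (hNle V₀ hV₀ hz)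
      have hUlb : ∀ V ∈ S, HMle U V := by
        intro V hV z hz
        rw [hkerUo] at hz
        rw [hUapp, hProj z hz]
        exact hagree V hV z hz
      have hUW : HMle U W := hinf.2 U hUpi hUlb
      -- T x lies in every range V
      have hxV : ∀ V ∈ S, x ∈ (LinearMap.ker (V : H →ₗ[ℂ] H))ᗮ := fun V hV =>
        HMle_orthoKer_le hWpi (hpi V (hS hV)) (hinf.1 V hV) hx
      have hyV : ∀ V ∈ S, T x ∈ LinearMap.range (V : H →ₗ[ℂ] H) := by
        intro V hV
        have := hT V (hS hV) x (hxV V hV)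
        rwa [(range_closed (hpi V (hS hV))).closure_eq] at this
      obtain ⟨z₀, hz₀, hVz₀⟩ := exists_preimage (hyV V₀ hV₀)
      have hz₀N : z₀ ∈ N := by
        rw [hmemN]
        intro V hV
        rcases hTO V (hS hV) V₀ (hS hV₀) with h | h
        · obtain ⟨zV, hzV, hVzV⟩ := exists_preimage (hyV V hV)
          have hzV' : zV ∈ (LinearMap.ker (V₀ : H →ₗ[ℂ] H))ᗮ :=
            HMle_orthoKer_le (hpi V (hS hV)) (hpi V₀ (hS hV₀)) h hzV
          have he : V₀ zV = T x := by rw [h zV hzV, hVzV]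
          have : z₀ = zV := pi_inj (hpi V₀ (hS hV₀)) hz₀ hzV' (by rw [hVz₀, he])
          rw [this]; exact hzV
        · exact HMle_orthoKer_le (hpi V₀ (hS hV₀)) (hpi V (hS hV)) h hz₀
      have hWz₀ : W z₀ = T x := by
        have h1 : W z₀ = U z₀ := hUW z₀ (by rw [hkerUo]; exact hz₀N)
        rw [h1, hUapp, hProj z₀ hz₀N, hVz₀]
      exact subset_closure ⟨z₀, hWz₀⟩
  · -- supremum case
    set M₀ : Submodule ℂ H := ⨆ (V : S), (LinearMap.ker ((V : H →L[ℂ] H) : H →ₗ[ℂ] H))ᗮ with hM₀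
    set M : Submodule ℂ H := M₀.topologicalClosure with hM
    haveI : CompleteSpace M := M₀.isClosed_topologicalClosure.completeSpace_coe
    have hVleM₀ : ∀ V ∈ S, (LinearMap.ker (V : H →ₗ[ℂ] H))ᗮ ≤ M₀ := fun V hV =>
      le_iSup (fun (V : S) => (LinearMap.ker ((V : H →L[ℂ] H) : H →ₗ[ℂ] H))ᗮ) ⟨V, hV⟩
    have hM₀W : M₀ ≤ (LinearMap.ker (W : H →ₗ[ℂ] H))ᗮ := by
      rw [hM₀]
      exact iSup_le fun V => HMle_orthoKer_le (hpi V (hS V.2)) hWpi (hsup.1 V V.2)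
    have hMW : M ≤ (LinearMap.ker (W : H →ₗ[ℂ] H))ᗮ := by
      rw [hM]
      exact M₀.topologicalClosure_minimal hM₀W (LinearMap.ker (W : H →ₗ[ℂ] H)).isClosed_orthogonal
    set U : H →L[ℂ] H := W.comp (M.subtypeL.comp (Submodule.orthogonalProjectionOnto M)) with hU
    have hUapp : ∀ z, U z = W ((Submodule.orthogonalProjectionOnto M z : H)) := fun z => rfl
    have hkerU : LinearMap.ker (U : H →ₗ[ℂ] H) = Mᗮ := by
      ext z
      rw [LinearMap.mem_ker, ContinuousLinearMap.coe_coe, hUapp]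
      have hn : ‖W ((Submodule.orthogonalProjectionOnto M z : H))‖ = ‖(Submodule.orthogonalProjectionOnto M z : H)‖ :=
        hWpi _ (hMW (Submodule.orthogonalProjectionOnto M z).2)
      constructor
      · intro h0
        rw [← Submodule.orthogonalProjectionOnto_eq_zero_iff (K := M), ← Submodule.coe_eq_zero]
        rw [h0, norm_zero] at hn
        exact (norm_eq_zero.mp hn.symm)
      · intro hz
        have : Submodule.orthogonalProjectionOnto M z = 0 := (Submodule.orthogonalProjectionOnto_eq_zero_iff (K := _)).mpr hz
        rw [this]; simp
    have hkerUo : (LinearMap.ker (U : H →ₗ[ℂ] H))ᗮ = M := by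
      rw [hkerU, Submodule.orthogonal_orthogonal]
    have hProj : ∀ z ∈ M, (Submodule.orthogonalProjectionOnto M z : H) = z := fun z hz =>
      Submodule.starProjection_eq_self_iff.mpr hz
    have hUpi : IsPartialIsometry U := by
      intro z hz
      rw [hkerUo] at hz
      rw [hUapp, hProj z hz]
      exact hWpi z (hMW hz)
    have hUub : ∀ V ∈ S, HMle V U := by
      intro V hV z hz
      rw [hUapp, hProj z (M₀.le_topologicalClosure (hVleM₀ V hV hz))]
      exact hsup.1 V hV z hz
    have hWU : HMle W U := hsup.2 U hUpi hUub
    -- x ∈ M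
    have hxM : x ∈ M := by
      have he : U x = W x := hWU x hx
      have hk : x - (Submodule.orthogonalProjectionOnto M x : H) ∈ LinearMap.ker (W : H →ₗ[ℂ] H) := by
        rw [LinearMap.mem_ker, map_sub, ContinuousLinearMap.coe_coe, ← hUapp, he, sub_self]
      have ho : x - (Submodule.orthogonalProjectionOnto M x : H) ∈ (LinearMap.ker (W : H →ₗ[ℂ] H))ᗮ :=
        Submodule.sub_mem _ hx (hMW (Submodule.orthogonalProjectionOnto M x).2)
      have h0 : x - (Submodule.orthogonalProjectionOnto M x : H) = 0 := by
        have := ho _ hk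
        exact sub_eq_zero.mpr (sub_eq_zero.mp (inner_self_eq_zero.mp this)) 
      have : x = (Submodule.orthogonalProjectionOnto M x : H) := by
        have := sub_eq_zero.mp h0; exact this
      rw [this]; exact (Submodule.orthogonalProjectionOnto M x).2
    -- T maps M₀ into range W, hence M into closure (range W)
    have hcom : M₀ ≤ (LinearMap.range (W : H →ₗ[ℂ] H)).comap (T : H →ₗ[ℂ] H) := by
      rw [hM₀]
      refine iSup_le fun V => ?_
      intro z hz
      have h1 : T z ∈ closure (LinearMap.range ((V : H →L[ℂ] H) : H →ₗ[ℂ] H) : Set H) := hT V (hS V.2) z hz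
      rw [(range_closed (hpi V (hS V.2))).closure_eq] at h1
      exact HMle_range_le (hsup.1 V V.2) h1
    have hsub : (M₀ : Set H) ⊆ T ⁻¹' closure (LinearMap.range (W : H →ₗ[ℂ] H) : Set H) := fun z hz =>
      subset_closure (hcom hz)
    have : (M : Set H) ⊆ T ⁻¹' closure (LinearMap.range (W : H →ₗ[ℂ] H) : Set H) := by
      rw [hM, Submodule.topologicalClosure_coe]
      exact closure_minimal hsub (isClosed_closure.preimage T.continuous)
    exact this hxM

theorem AF_eq_A_completeCover (𝓕 : Set (H →L[ℂ] H))
    (hpi : ∀ V ∈ 𝓕, IsPartialIsometry V)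
    (hTO : ∀ E ∈ 𝓕, ∀ F ∈ 𝓕, HMle E F ∨ HMle F E)
    (T : H →L[ℂ] H)
    (hT : ∀ V ∈ 𝓕, ∀ x ∈ (LinearMap.ker (V : H →ₗ[ℂ] H))ᗮ, T x ∈ closure (LinearMap.range (V : H →ₗ[ℂ] H) : Set H)) :
    (∀ S ⊆ 𝓕, ∀ W : H →L[ℂ] H, IsPartialIsometry W → (IsInfHM S W ∨ IsSupHM S W) →
      ∀ x ∈ (LinearMap.ker (W : H →ₗ[ℂ] H))ᗮ, T x ∈ closure (LinearMap.range (W : H →ₗ[ℂ] H) : Set H)) ∧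
    ({T' : H →L[ℂ] H | ∀ V ∈ 𝓕, ∀ x ∈ (LinearMap.ker (V : H →ₗ[ℂ] H))ᗮ,
        T' x ∈ closure (LinearMap.range (V : H →ₗ[ℂ] H) : Set H)} =
      {T' : H →L[ℂ] H | ∀ W ∈ insert (0 : H →L[ℂ] H)
          {W : H →L[ℂ] H | IsPartialIsometry W ∧ ∃ S ⊆ 𝓕, IsInfHM S W ∨ IsSupHM S W},
        ∀ x ∈ (LinearMap.ker (W : H →ₗ[ℂ] H))ᗮ, T' x ∈ closure (LinearMap.range (W : H →ₗ[ℂ] H) : Set H)}) := by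
  constructor
  · exact key 𝓕 hpi hTO T hT
  · ext T'
    simp only [Set.mem_setOf_eq]
    constructor
    · intro h W hW x hx
      rcases Set.mem_insert_iff.mp hW with rfl | ⟨hWpi, S, hS, hio⟩
      · have hk : (LinearMap.ker ((0 : H →L[ℂ] H) : H →ₗ[ℂ] H))ᗮ = ⊥ := by
          have : LinearMap.ker ((0 : H →L[ℂ] H) : H →ₗ[ℂ] H) = ⊤ := by ext y; simp [LinearMap.mem_ker]
          rw [this, Submodule.top_orthogonal_eq_bot]
        rw [hk] at hx
        have hx0 : x = 0 := hx
        rw [hx0, map_zero]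
        exact subset_closure ⟨0, map_zero _⟩
      · exact key 𝓕 hpi hTO T' h S hS W hWpi hio x hx
    · intro h V hV x hx
      refine h V (Set.mem_insert_of_mem _
        ⟨hpi V hV, {V}, Set.singleton_subset_iff.mpr hV, Or.inr ⟨?_, ?_⟩⟩) x hx
      · intro V' hV' z hz
        rw [Set.mem_singleton_iff.mp hV']
      · intro U _ hub
        exact hub V (Set.mem_singleton V)
end

section
/- Let E be a totally ordered complete family of partial isometries on H whose associated space A_E is an algebra (equivalently, for all V ∈ E either ran V ⊆ (ker V)ᗮ or ran V = H), and suppose the identity operator I belongs to A_E. Then for every V ∈ E, the initial space (ker V)ᗮ is contained in the final space closure(ran V), so A_E contains the nest algebra of the nest of final projections and equals a nest algebra. -/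
open ContinuousLinearMap

variable {H : Type*} [NormedAddCommGroup H] [InnerProductSpace ℂ H] [CompleteSpace H]

theorem AE_eq_nestAlgebra_of_identity_mem (𝓔 : Set (H →L[ℂ] H))
    (hpi : ∀ V ∈ 𝓔, IsPartialIsometry V)
    (hTO : ∀ E ∈ 𝓔, ∀ F ∈ 𝓔, HMle E F ∨ HMle F E)
    (h0 : (0 : H →L[ℂ] H) ∈ 𝓔)
    (hcomplete : ∀ S ⊆ 𝓔, (∃ W ∈ 𝓔, IsSupHM S W) ∧ (∃ W ∈ 𝓔, IsInfHM S W))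
    (halg : ∀ V ∈ 𝓔, LinearMap.range (V : H →ₗ[ℂ] H) ≤ (LinearMap.ker (V : H →ₗ[ℂ] H))ᗮ ∨ LinearMap.range (V : H →ₗ[ℂ] H) = ⊤)
    (hI : ∀ V ∈ 𝓔, ∀ x ∈ (LinearMap.ker (V : H →ₗ[ℂ] H))ᗮ,
      (1 : H →L[ℂ] H) x ∈ closure (LinearMap.range (V : H →ₗ[ℂ] H) : Set H)) :
    (∀ V ∈ 𝓔, ((LinearMap.ker (V : H →ₗ[ℂ] H))ᗮ : Set H) ⊆ closure (LinearMap.range (V : H →ₗ[ℂ] H) : Set H)) ∧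
    ({T : H →L[ℂ] H | ∀ V ∈ 𝓔, ∀ x ∈ (LinearMap.ker (V : H →ₗ[ℂ] H))ᗮ,
        T x ∈ closure (LinearMap.range (V : H →ₗ[ℂ] H) : Set H)} =
      {T : H →L[ℂ] H | ∀ V ∈ 𝓔, ∀ y ∈ closure (LinearMap.range (V : H →ₗ[ℂ] H) : Set H),
        T y ∈ closure (LinearMap.range (V : H →ₗ[ℂ] H) : Set H)}) := by
  have hsub : ∀ V ∈ 𝓔, ((LinearMap.ker (V : H →ₗ[ℂ] H))ᗮ : Set H) ⊆ closure (LinearMap.range (V : H →ₗ[ℂ] H) : Set H) := by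
    intro V hV x hx
    simpa using hI V hV x hx
  refine ⟨hsub, ?_⟩
  ext T
  simp only [Set.mem_setOf_eq]
  constructor
  · intro hT V hV y hy
    rcases halg V hV with hle | htop
    · have hclosed : IsClosed ((LinearMap.ker (V : H →ₗ[ℂ] H))ᗮ : Set H) :=
        Submodule.isClosed_orthogonal _
      have : closure (LinearMap.range (V : H →ₗ[ℂ] H) : Set H) ⊆ ((LinearMap.ker (V : H →ₗ[ℂ] H))ᗮ : Set H) :=
        closure_minimal hle hclosed
      exact hT V hV y (this hy)
    · have : (LinearMap.range (V : H →ₗ[ℂ] H) : Set H) = Set.univ := by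
        rw [htop]; rfl
      rw [this, closure_univ]
      trivial
  · intro hT V hV x hx
    exact hT V hV x (hsub V hV hx)
end
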